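/- Let p be a prime number with p ≠ 2, let ℤ₍ₚ₎ = { m/n ∈ ℚ : p ∤ n } be the localization of ℤ at the prime p, and let C₃ be the cyclic group of order 3. Then the group ring ℤ₍ₚ₎C₃ is 2-clean: every element is the sum of an idempotent and two units. -/

import Mathlib

open Polynomial

lemma core_lemma (p : ℕ) (hp : p.Prime) (hp2 : p ≠ 2) (x y z : ZMod p) :
    ∃ t : ZMod p, t ≠ 0 ∧ (x - t)^3 + y^3 + z^3 - 3*(x-t)*y*z ≠ 0 := by
  haveI : Fact p.Prime := ⟨hp⟩
  by_cases hp3 : p = 3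
  · subst hp3; revert x y z; decide
  · have h5 : 5 ≤ p := hp.five_le_of_ne_two_of_ne_three hp2 hp3
    set P : Polynomial (ZMod p) :=
      X * ((C x - X)^3 + C (y^3) + C (z^3) - 3*(C x - X)*(C y)*(C z)) with hPdef
    have hdeg : P.natDegree = 4 := by
      unfold P
      compute_degree!
    have hP0 : P ≠ 0 := fun h => by simp [h] at hdeg
    have hcard : (P.natDegree : Cardinal) < Cardinal.mk (ZMod p) := by
      rw [Cardinal.mk_fintype, ZMod.card, hdeg]
      exact_mod_cast by omega
    obtain ⟨t, ht⟩ := P.exists_eval_ne_zero_of_natDegree_lt_card hP0 hcard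
    have ht' : t * ((x - t)^3 + y^3 + z^3 - 3*(x-t)*y*z) ≠ 0 := by
      simpa [hPdef] using ht
    exact ⟨t, left_ne_zero_of_mul ht', right_ne_zero_of_mul ht'⟩


lemma exists_hom (p : ℕ) (hp : p.Prime) (Zp : Subring ℚ)
    (hZp : ∀ q : ℚ, q ∈ Zp ↔ ∃ m n : ℤ, ¬ ((p : ℤ) ∣ n) ∧ q = (m : ℚ) / (n : ℚ)) :
    ∃ φ : Zp →+* ZMod p, ∀ q : Zp, φ q ≠ 0 → IsUnit q := by
  haveI : Fact p.Prime := ⟨hp⟩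
  have hpZ : Prime (p : ℤ) := Nat.prime_iff_prime_int.mp hp
  -- submonoid of integers not divisible by p
  set S : Submonoid ℤ :=
    { carrier := {n : ℤ | ¬ (p : ℤ) ∣ n}
      one_mem' := by simpa using hpZ.not_dvd_one
      mul_mem' := fun {a b} ha hb hab => ((hpZ.dvd_mul.mp hab).elim ha hb) } with hSdef
  have hmem : ∀ n : ℤ, n ∈ S ↔ ¬ (p:ℤ) ∣ n := fun n => Iff.rfl
  -- casts of S elements are nonzero
  have hSne : ∀ s : ℤ, s ∈ S → (s : ℚ) ≠ 0 := by
    intro s hs h0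
    exact hs (by simp [show s = 0 from by exact_mod_cast h0])
  -- inverses of S elements are in Zp
  have hinv : ∀ s : ℤ, s ∈ S → (s : ℚ)⁻¹ ∈ Zp := by
    intro s hs
    refine (hZp _).mpr ⟨1, s, hs, ?_⟩
    push_cast
    rw [one_div]
  have hunits : ∀ s : S, IsUnit ((algebraMap ℤ Zp) s) := by
    intro ⟨s, hs⟩
    refine IsUnit.of_mul_eq_one ⟨(s : ℚ)⁻¹, hinv s hs⟩ ?_
    ext
    push_cast
    exact mul_inv_cancel₀ (hSne s hs)
  haveI : IsLocalization S Zp := by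
    refine ⟨⟨?_, ?_, ?_⟩⟩
    · exact hunits
    · intro q
      obtain ⟨m, n, hn, hq⟩ := (hZp q).mp q.2
      refine ⟨⟨m, ⟨n, hn⟩⟩, ?_⟩
      ext
      push_cast
      show (q : ℚ) * n = m
      rw [hq, div_mul_cancel₀]
      exact hSne n hn
    · intro a b hab
      have h1 : ((a : ℚ)) = ((b : ℚ)) := by
        have h0 := congrArg Subtype.val hab
        push_cast at h0
        exact h0
      have h2 : a = b := by exact_mod_cast h1
      exact ⟨1, by rw [h2]⟩
  have hg : ∀ s : S, IsUnit ((Int.castRingHom (ZMod p)) s) := by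
    intro ⟨s, hs⟩
    refine isUnit_iff_ne_zero.mpr ?_
    simpa [ZMod.intCast_zmod_eq_zero_iff_dvd] using (hmem s).mp hs
  refine ⟨IsLocalization.lift (M := S) (S := Zp) hg, ?_⟩
  intro q hq
  obtain ⟨m, n, hn, hqv⟩ := (hZp (q : ℚ)).mp q.2
  have key : q * (algebraMap ℤ Zp) n = (algebraMap ℤ Zp) m := by
    ext
    push_cast
    show (q : ℚ) * n = m
    rw [hqv, div_mul_cancel₀]
    exact hSne n hn
  -- apply φ to key
  have hm : ¬ (p : ℤ) ∣ m := by
    intro hdvd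
    apply hq
    have := congrArg (IsLocalization.lift (M := S) (S := Zp) hg) key
    rw [map_mul, IsLocalization.lift_eq, IsLocalization.lift_eq] at this
    have hm0 : (Int.castRingHom (ZMod p)) m = 0 := by
      simpa using (ZMod.intCast_zmod_eq_zero_iff_dvd m p).mpr hdvd
    rw [hm0] at this
    rcases mul_eq_zero.mp this with h | h
    · exact h
    · exact absurd h (hg ⟨n, hn⟩).ne_zero
  have : IsUnit (q * (algebraMap ℤ Zp) n) := key ▸ hunits ⟨m, hm⟩
  exact isUnit_of_mul_isUnit_left this


open MonoidAlgebra

noncomputable section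

def o (i : ZMod 3) : Multiplicative (ZMod 3) := Multiplicative.ofAdd i

variable {R : Type*} [CommRing R]

lemma decomp (a : MonoidAlgebra R (Multiplicative (ZMod 3))) :
    a = single (o 0) (a.coeff (o 0)) + single (o 1) (a.coeff (o 1)) + single (o 2) (a.coeff (o 2)) := by
  ext x
  rcases (show x = o 0 ∨ x = o 1 ∨ x = o 2 by revert x; decide) with h | h | h <;> subst h <;>
    erw [Finsupp.add_apply, Finsupp.add_apply] <;>
    simp (config := { decide := true }) [Finsupp.single_apply]

lemma mul3 (c0 c1 c2 d0 d1 d2 : R) :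
    (single (o 0) c0 + single (o 1) c1 + single (o 2) c2 :
        MonoidAlgebra R (Multiplicative (ZMod 3))) *
      (single (o 0) d0 + single (o 1) d1 + single (o 2) d2) =
    single (o 0) (c0*d0 + c1*d2 + c2*d1) + single (o 1) (c0*d1 + c1*d0 + c2*d2)
      + single (o 2) (c0*d2 + c1*d1 + c2*d0) := by
  simp only [add_mul, mul_add, MonoidAlgebra.single_mul_single]
  rw [show o 0 * o 0 = o 0 by decide, show o 0 * o 1 = o 1 by decide,
    show o 0 * o 2 = o 2 by decide, show o 1 * o 0 = o 1 by decide,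
    show o 1 * o 1 = o 2 by decide, show o 1 * o 2 = o 0 by decide,
    show o 2 * o 0 = o 2 by decide, show o 2 * o 1 = o 0 by decide,
    show o 2 * o 2 = o 1 by decide]
  ext x
  rcases (show x = o 0 ∨ x = o 1 ∨ x = o 2 by revert x; decide) with h | h | h <;> subst h <;>
    erw [Finsupp.add_apply, Finsupp.add_apply, Finsupp.add_apply, Finsupp.add_apply,
      Finsupp.add_apply, Finsupp.add_apply, Finsupp.add_apply, Finsupp.add_apply,
      Finsupp.add_apply, Finsupp.add_apply] <;>
    simp (config := { decide := true }) [Finsupp.single_apply] <;> ring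

lemma one3 : (1 : MonoidAlgebra R (Multiplicative (ZMod 3))) =
    single (o 0) 1 + single (o 1) 0 + single (o 2) 0 := by
  rw [MonoidAlgebra.one_def]
  simp only [MonoidAlgebra.single_zero]
  rw [show (1 : Multiplicative (ZMod 3)) = o 0 by decide]
  simp

lemma isUnit3 (c0 c1 c2 : R)
    (h : IsUnit (c0^3 + c1^3 + c2^3 - 3*c0*c1*c2)) :
    IsUnit (single (o 0) c0 + single (o 1) c1 + single (o 2) c2 :
      MonoidAlgebra R (Multiplicative (ZMod 3))) := by
  obtain ⟨N', hN'⟩ := h.exists_right_inv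
  refine IsUnit.of_mul_eq_one
    ((single (o 0) (c0^2 - c1*c2) + single (o 1) (c2^2 - c0*c1) + single (o 2) (c1^2 - c0*c2)) *
      (single (o 0) N' + single (o 1) 0 + single (o 2) 0)) ?_
  rw [← mul_assoc, mul3, mul3, one3]
  ext x
  rcases (show x = o 0 ∨ x = o 1 ∨ x = o 2 by revert x; decide) with h | h | h <;> subst h <;>
    erw [Finsupp.add_apply, Finsupp.add_apply, Finsupp.add_apply, Finsupp.add_apply] <;>
    simp (config := { decide := true }) [Finsupp.single_apply] <;>
    first
    | linear_combination hN'
    | ring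

lemma final3 (c0 c1 c2 tc : R) :
    (single (o 0) c0 + single (o 1) c1 + single (o 2) c2 :
        MonoidAlgebra R (Multiplicative (ZMod 3))) =
      0 + (single (o 0) tc + single (o 1) 0 + single (o 2) 0)
        + (single (o 0) (c0 - tc) + single (o 1) c1 + single (o 2) c2) := by
  ext x
  rcases (show x = o 0 ∨ x = o 1 ∨ x = o 2 by revert x; decide) with h | h | h <;> subst h <;>
    erw [Finsupp.add_apply, Finsupp.add_apply, Finsupp.add_apply, Finsupp.add_apply,
      Finsupp.add_apply, Finsupp.add_apply, Finsupp.add_apply, Finsupp.add_apply] <;>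
    simp (config := { decide := true }) [Finsupp.single_apply]

end

/-- let `p ≠ 2` be a prime, `ℤ₍ₚ₎` the subring of `ℚ` of fractions `m/n` with
`p ∤ n`, and `C₃` the cyclic group of order 3.  Then the group ring `ℤ₍ₚ₎C₃` is 2-clean:
every element is the sum of an idempotent and two units. -/
theorem stmt_16 (p : ℕ) (hp : p.Prime) (hp2 : p ≠ 2) (Zp : Subring ℚ)
    (hZp : ∀ q : ℚ, q ∈ Zp ↔ ∃ m n : ℤ, ¬ ((p : ℤ) ∣ n) ∧ q = (m : ℚ) / (n : ℚ)) :
    ∀ a : MonoidAlgebra Zp (Multiplicative (ZMod 3)),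
      ∃ (e : MonoidAlgebra Zp (Multiplicative (ZMod 3)))
        (u₁ u₂ : (MonoidAlgebra Zp (Multiplicative (ZMod 3)))ˣ),
        IsIdempotentElem e ∧
          a = e + (u₁ : MonoidAlgebra Zp (Multiplicative (ZMod 3)))
            + (u₂ : MonoidAlgebra Zp (Multiplicative (ZMod 3))) := by
  haveI : Fact p.Prime := ⟨hp⟩
  intro a
  obtain ⟨φ, hφ⟩ := exists_hom p hp Zp hZp
  set c0 := a.coeff (o 0) with hc0
  set c1 := a.coeff (o 1) with hc1
  set c2 := a.coeff (o 2) with hc2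
  obtain ⟨t, ht0, htN⟩ := core_lemma p hp hp2 (φ c0) (φ c1) (φ c2)
  set tc : Zp := ((t.val : ℕ) : Zp) with htc
  have hφt : φ tc = t := by
    rw [htc, map_natCast, ZMod.natCast_val, ZMod.cast_id]
  have hu1 : IsUnit (MonoidAlgebra.single (M := Multiplicative (ZMod 3)) (o 0) tc
      + MonoidAlgebra.single (o 1) (0 : Zp) + MonoidAlgebra.single (o 2) (0 : Zp)) := by
    apply isUnit3
    apply hφ
    have : φ (tc^3 + 0^3 + 0^3 - 3*tc*0*0) = t^3 := by
      simp only [map_sub, map_add, map_pow, map_mul, map_zero, map_ofNat, hφt]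
      ring
    rw [this]
    exact pow_ne_zero _ ht0
  have hu2 : IsUnit (MonoidAlgebra.single (M := Multiplicative (ZMod 3)) (o 0) (c0 - tc)
      + MonoidAlgebra.single (o 1) c1 + MonoidAlgebra.single (o 2) c2) := by
    apply isUnit3
    apply hφ
    have : φ ((c0 - tc)^3 + c1^3 + c2^3 - 3*(c0 - tc)*c1*c2)
        = (φ c0 - t)^3 + (φ c1)^3 + (φ c2)^3 - 3*(φ c0 - t)*(φ c1)*(φ c2) := by
      simp only [map_sub, map_add, map_pow, map_mul, map_zero, map_ofNat, hφt]
    rw [this]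
    exact htN
  refine ⟨0, hu1.unit, hu2.unit, IsIdempotentElem.zero, ?_⟩
  rw [IsUnit.unit_spec, IsUnit.unit_spec]
  calc a = MonoidAlgebra.single (o 0) c0 + MonoidAlgebra.single (o 1) c1
        + MonoidAlgebra.single (o 2) c2 := decomp a
    _ = _ := final3 c0 c1 c2 tc
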